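/- Fix λ > 0 and let y : (0,∞) → [0,∞) be a C¹ function with y′(z) = y(z)² − λ r(z)² for all z > 0, y(z) → 0 as z → ∞, y integrable on (0,1), and y(z) ≤ √λ · r(z) for all z outside a compact subset of (0,∞). Define Φ(z) := (e^{−m(z)}/ω(z)) · exp{ −∫_0^{I(z)} y(v) dv } · ∫_0^z exp{ m(u) + 2∫_0^{I(u)} y(v) dv } du. Then for every x > 0 the functions z ↦ e^{−xz}Φ(z), z ↦ z e^{−xz}Φ(z) and z ↦ z² e^{−xz}Φ(z) are integrable on (0,∞); consequently h(x) := 1 + λ ∫_0^∞ e^{−xz} Φ(z) dz is a well-defined, positive, non-increasing C² function on (0,∞). -/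

import Mathlib

open MeasureTheory Set


/-- Quadratic bound for exp near 0. -/
lemma aux_quad {t : ℝ} (ht : 0 ≤ t) : Real.exp (-t) - 1 + t ≤ t ^ 2 / 2 := by
  set F : ℝ → ℝ := fun u => u ^ 2 / 2 - u + 1 - Real.exp (-u) with hF
  have hder : ∀ x : ℝ, HasDerivAt F (x - 1 + Real.exp (-x)) x := by
    intro x
    have h1 : HasDerivAt (fun u : ℝ => u ^ 2 / 2) x x := by
      simpa using (hasDerivAt_pow 2 x).div_const 2
    have h2 : HasDerivAt (fun u : ℝ => Real.exp (-u)) (-Real.exp (-x)) x := by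
      simpa using (hasDerivAt_neg x).exp
    have := ((h1.sub (hasDerivAt_id x)).add_const 1).sub h2
    exact this.congr_deriv (by ring)
  have hmono : MonotoneOn F (Ici (0:ℝ)) := by
    apply monotoneOn_of_deriv_nonneg (convex_Ici 0)
    · exact (fun x _ => (hder x).continuousAt.continuousWithinAt)
    · exact fun x _ => (hder x).differentiableAt.differentiableWithinAt
    · intro x hx
      rw [(hder x).deriv]
      have := Real.add_one_le_exp (-x)
      linarith
  have h0 : F 0 = 0 := by simp [hF]
  have := hmono (self_mem_Ici) ht ht
  rw [h0] at this
  simp only [hF] at this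
  linarith

/-- Continuity of the primitive on `Ici 0`. -/
lemma cont_primitive {f : ℝ → ℝ} (hf : ∀ T : ℝ, 0 < T → IntervalIntegrable f volume 0 T) :
    ContinuousOn (fun z => ∫ t in (0:ℝ)..z, f t) (Ici 0) := by
  intro z hz
  have hz' : (0:ℝ) < z + 1 := by simp only [mem_Ici] at hz; linarith
  have h1 : ContinuousOn (fun w => ∫ t in (0:ℝ)..w, f t) (uIcc 0 (z+1)) :=
    intervalIntegral.continuousOn_primitive_interval' (hf (z+1) hz') left_mem_uIcc
  have hzmem : z ∈ uIcc (0:ℝ) (z+1) := by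
    rw [uIcc_of_le (le_of_lt hz')]
    exact ⟨hz, by linarith⟩
  have hmem : uIcc (0:ℝ) (z+1) ∈ nhdsWithin z (Ici 0) := by
    rw [uIcc_of_le (le_of_lt hz')]
    apply mem_nhdsWithin.2
    exact ⟨Iio (z+1), isOpen_Iio, by simp only [mem_Iio]; linarith,
      fun w hw => ⟨hw.2, le_of_lt hw.1⟩⟩
  exact (h1 z hzmem).mono_of_mem_nhdsWithin hmem



lemma psi_cont (b γ : ℝ) (μ : Measure ℝ)
    (hμ2 : ∫⁻ x in Ioi (0:ℝ), ENNReal.ofReal (min 1 (x ^ 2)) ∂μ < ⊤)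
    (ψ : ℝ → ℝ)
    (hψ : ∀ u, ψ u = -(b * u) + γ ^ 2 * u ^ 2 +
      ∫ x in Ioi (0:ℝ), (Real.exp (-(u * x)) - 1 + (if x < 1 then u * x else 0)) ∂μ) :
    ContinuousOn ψ (Ioi 0) := by
  have hmin_nonneg : ∀ x : ℝ, 0 ≤ min 1 (x ^ 2) := fun x => le_min one_pos.le (sq_nonneg x)
  have hbint : Integrable (fun x => min 1 (x ^ 2)) (μ.restrict (Ioi 0)) := by
    refine ⟨(continuous_const.min (continuous_pow 2)).aestronglyMeasurable, ?_⟩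
    rw [hasFiniteIntegral_iff_ofReal (Filter.Eventually.of_forall hmin_nonneg)]
    exact hμ2
  have hmeas : ∀ u : ℝ, AEStronglyMeasurable
      (fun x => Real.exp (-(u * x)) - 1 + (if x < 1 then u * x else 0))
      (μ.restrict (Ioi 0)) := by
    intro u
    refine Measurable.aestronglyMeasurable ?_
    exact (((Real.measurable_exp.comp (measurable_id.const_mul u).neg)).sub
      measurable_const).add
      (Measurable.ite measurableSet_Iio (measurable_id.const_mul u) measurable_const)
  have key : ∀ u₀ ∈ Ioi (0:ℝ), ContinuousAt (fun u => ∫ x in Ioi (0:ℝ),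
      (Real.exp (-(u * x)) - 1 + (if x < 1 then u * x else 0)) ∂μ) u₀ := by
    intro u₀ hu₀
    simp only [mem_Ioi] at hu₀
    apply continuousAt_of_dominated (bound := fun x => max ((u₀+1)^2/2) 1 * min 1 (x ^ 2))
    · exact Filter.Eventually.of_forall hmeas
    · have hnb : Ioo (0:ℝ) (u₀+1) ∈ nhds u₀ := isOpen_Ioo.mem_nhds ⟨hu₀, by linarith⟩
      filter_upwards [hnb] with u hu
      filter_upwards [ae_restrict_mem measurableSet_Ioi] with x hx
      simp only [mem_Ioi] at hx
      obtain ⟨hu0, hu1⟩ := hu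
      by_cases hx1 : x < 1
      · simp only [if_pos hx1]
        have hux : 0 ≤ u * x := mul_nonneg hu0.le hx.le
        have h1 : 0 ≤ Real.exp (-(u * x)) - 1 + u * x := by
          have := Real.add_one_le_exp (-(u * x)); linarith
        have h2 : Real.exp (-(u * x)) - 1 + u * x ≤ (u * x) ^ 2 / 2 := aux_quad hux
        have h3 : (u * x) ^ 2 / 2 ≤ (u₀+1) ^ 2 / 2 * x ^ 2 := by
          have : u ^ 2 ≤ (u₀+1) ^ 2 := by nlinarith
          have hx2 : 0 ≤ x ^ 2 := sq_nonneg x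
          nlinarith [sq_nonneg x]
        have hminx : min 1 (x ^ 2) = x ^ 2 := min_eq_right (by nlinarith)
        rw [Real.norm_eq_abs, abs_of_nonneg h1, hminx]
        calc Real.exp (-(u * x)) - 1 + u * x ≤ (u₀+1) ^ 2 / 2 * x ^ 2 := le_trans h2 h3
        _ ≤ max ((u₀+1)^2/2) 1 * x ^ 2 :=
          mul_le_mul_of_nonneg_right (le_max_left _ _) (sq_nonneg x)
      · simp only [if_neg hx1]
        push_neg at hx1
        have he1 : Real.exp (-(u * x)) ≤ 1 := by
          rw [Real.exp_le_one_iff]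
          have : 0 ≤ u * x := mul_nonneg hu0.le hx.le
          linarith
        have he0 : 0 < Real.exp (-(u * x)) := Real.exp_pos _
        have hminx : min 1 (x ^ 2) = 1 := min_eq_left (by nlinarith)
        rw [Real.norm_eq_abs, hminx, mul_one, add_zero, abs_of_nonpos (by linarith)]
        have : 1 ≤ max ((u₀+1)^2/2) 1 := le_max_right _ _
        linarith
    · exact hbint.const_mul _
    · refine Filter.Eventually.of_forall (fun x => ?_)
      apply ContinuousAt.add
      · exact ((Real.continuous_exp.comp ((continuous_id.mul continuous_const).neg)).sub
          continuous_const).continuousAt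
      · by_cases hx1 : x < 1 <;> simp only [hx1, if_true, if_false] <;> fun_prop
  have : ContinuousOn (fun u => -(b * u) + γ ^ 2 * u ^ 2 +
      ∫ x in Ioi (0:ℝ), (Real.exp (-(u * x)) - 1 + (if x < 1 then u * x else 0)) ∂μ)
      (Ioi 0) := by
    apply ContinuousOn.add
    · fun_prop
    · exact fun u hu => (key u hu).continuousWithinAt
  exact this.congr (fun u _ => hψ u)



set_option maxHeartbeats 1000000 in
lemma master (c σ : ℝ) (hc : 0 < c) (hσ : 0 < σ)
    (ω m I Iinv r : ℝ → ℝ) (ϑ : ℝ) (hϑpos : 0 < ϑ)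
    (hω : ∀ z, ω z = c * z + σ ^ 2 * z ^ 2 / 2)
    (hmc : ContinuousOn m (Ici 0))
    (hmono : ∀ z₁ z₂, ϑ ≤ z₁ → z₁ ≤ z₂ → m z₁ ≤ m z₂)
    (hI : ∀ w, I w = ∫ u in (0:ℝ)..w, Real.exp (m u))
    (hIinv_left : ∀ x, 0 ≤ x → Iinv (I x) = x)
    (hIinv_right : ∀ z, 0 ≤ z → I (Iinv z) = z)
    (hr : ∀ z, r z = Real.exp (-(m (Iinv z))) / Real.sqrt (ω (Iinv z)))
    (lam : ℝ) (hlam : 0 < lam)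
    (y : ℝ → ℝ)
    (hy : ∀ z ∈ Ioi (0:ℝ), 0 ≤ y z ∧ HasDerivAt y ((y z) ^ 2 - lam * (r z) ^ 2) z)
    (hyint : IntegrableOn y (Ioo 0 1) volume)
    (hybound : ∃ Kc : Set ℝ, IsCompact Kc ∧ Kc ⊆ Ioi 0 ∧
      ∀ z ∈ Ioi (0:ℝ) \ Kc, y z ≤ Real.sqrt lam * r z)
    (Φ h : ℝ → ℝ)
    (hΦ : ∀ z, Φ z = (Real.exp (-(m z)) / ω z) *
      Real.exp (-(∫ v in (0:ℝ)..(I z), y v)) *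
      (∫ u in (0:ℝ)..z, Real.exp (m u + 2 * ∫ v in (0:ℝ)..(I u), y v)))
    (hh : ∀ x, h x = 1 + lam * ∫ z in Ioi (0:ℝ), Real.exp (-(x * z)) * Φ z) :
    (∀ x : ℝ, 0 < x →
      IntegrableOn (fun z => Real.exp (-(x * z)) * Φ z) (Ioi 0) volume ∧
      IntegrableOn (fun z => z * (Real.exp (-(x * z)) * Φ z)) (Ioi 0) volume ∧
      IntegrableOn (fun z => z ^ 2 * (Real.exp (-(x * z)) * Φ z)) (Ioi 0) volume) ∧
    (∀ x : ℝ, 0 < x → 0 < h x) ∧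
    AntitoneOn h (Ioi 0) ∧
    ContDiffOn ℝ 2 h (Ioi 0) := by
  -- ω facts
  have hωpos : ∀ z : ℝ, 0 < z → 0 < ω z := by
    intro z hz; rw [hω]; nlinarith [sq_nonneg (σ * z)]
  have hωcont : Continuous ω := by
    have : ω = fun z => c * z + σ ^ 2 * z ^ 2 / 2 := funext hω
    rw [this]; fun_prop
  have hωlb : ∀ z : ℝ, 0 < z → σ ^ 2 * z ^ 2 / 2 ≤ ω z := by
    intro z hz; rw [hω]; nlinarith
  have hωlb' : ∀ z : ℝ, 0 < z → c * z ≤ ω z := by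
    intro z hz; rw [hω]; nlinarith [sq_nonneg (σ * z)]
  -- key: √lam / √(ω u) ≤ p / u
  set p : ℝ := Real.sqrt lam * Real.sqrt 2 / σ with hp
  have hppos : 0 < p := by
    apply div_pos (mul_pos (Real.sqrt_pos.2 hlam) (Real.sqrt_pos.2 two_pos)) hσ
  have hsqrtω : ∀ u : ℝ, 0 < u → σ * u / Real.sqrt 2 ≤ Real.sqrt (ω u) := by
    intro u hu
    apply Real.le_sqrt_of_sq_le
    rw [div_pow, Real.sq_sqrt (by norm_num : (0:ℝ) ≤ 2)]
    have := hωlb u hu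
    nlinarith
  have hkey : ∀ u : ℝ, 0 < u → Real.sqrt lam / Real.sqrt (ω u) ≤ p / u := by
    intro u hu
    have h1 : 0 < σ * u / Real.sqrt 2 :=
      div_pos (mul_pos hσ hu) (Real.sqrt_pos.2 two_pos)
    have h2 := hsqrtω u hu
    have h3 : Real.sqrt lam / Real.sqrt (ω u) ≤ Real.sqrt lam / (σ * u / Real.sqrt 2) :=
      div_le_div_of_nonneg_left (Real.sqrt_nonneg lam) h1 h2
    refine h3.trans (le_of_eq ?_)
    rw [hp]
    field_simp
  -- y facts
  have ycont : ContinuousOn y (Ioi 0) :=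
    fun z hz => ((hy z hz).2.continuousAt).continuousWithinAt
  have ynn : ∀ z : ℝ, 0 < z → 0 ≤ y z := fun z hz => (hy z (mem_Ioi.2 hz)).1
  have yint : ∀ T : ℝ, 0 ≤ T → IntervalIntegrable y volume 0 T := by
    intro T hT
    rcases eq_or_lt_of_le hT with hT0 | hT0
    · rw [← hT0]
    · rw [intervalIntegrable_iff_integrableOn_Ioc_of_le hT]
      have hsub : Ioc 0 T ⊆ Ioo 0 1 ∪ Icc 1 (max 1 T) := by
        intro x hx
        rcases lt_or_ge x 1 with hx1 | hx1
        · exact Or.inl ⟨hx.1, hx1⟩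
        · exact Or.inr ⟨hx1, le_trans hx.2 (le_max_right _ _)⟩
      have hIcc : IntegrableOn y (Icc 1 (max 1 T)) volume := by
        apply ContinuousOn.integrableOn_Icc
        exact ycont.mono (fun x hx => lt_of_lt_of_le one_pos hx.1)
      exact (hyint.union hIcc).mono_set hsub
  -- A facts
  set A : ℝ → ℝ := fun t => ∫ v in (0:ℝ)..t, y v with hA
  have hAnn : ∀ t : ℝ, 0 ≤ t → 0 ≤ A t := by
    intro t ht
    rw [hA]
    simp only
    rw [intervalIntegral.integral_of_le ht]
    exact setIntegral_nonneg measurableSet_Ioc (fun v hv => ynn v hv.1)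
  have hAadd : ∀ t₁ t₂ : ℝ, 0 ≤ t₁ → t₁ ≤ t₂ → A t₂ = A t₁ + ∫ v in t₁..t₂, y v := by
    intro t₁ t₂ ht₁ ht
    rw [hA]
    simp only
    rw [← intervalIntegral.integral_add_adjacent_intervals (yint t₁ ht₁)
      ((yint t₂ (le_trans ht₁ ht)).mono_set ?_)]
    rw [uIcc_of_le ht, uIcc_of_le (le_trans ht₁ ht)]
    exact Icc_subset_Icc ht₁ le_rfl
  have hAmono : ∀ t₁ t₂ : ℝ, 0 ≤ t₁ → t₁ ≤ t₂ → A t₁ ≤ A t₂ := by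
    intro t₁ t₂ ht₁ ht
    rw [hAadd t₁ t₂ ht₁ ht]
    have : 0 ≤ ∫ v in t₁..t₂, y v := by
      rw [intervalIntegral.integral_of_le ht]
      exact setIntegral_nonneg measurableSet_Ioc
        (fun v hv => ynn v (lt_of_le_of_lt ht₁ hv.1))
    linarith
  have hAcont : ContinuousOn A (Ici 0) := cont_primitive (fun T hT => yint T hT.le)
  -- I facts
  have hmexp_cont : ContinuousOn (fun u => Real.exp (m u)) (Ici 0) :=
    Real.continuous_exp.comp_continuousOn hmc
  have hIint : ∀ a b : ℝ, 0 ≤ a → 0 ≤ b →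
      IntervalIntegrable (fun u => Real.exp (m u)) volume a b := by
    intro a b ha hb
    apply ContinuousOn.intervalIntegrable
    apply hmexp_cont.mono
    intro x hx
    rcases le_total a b with hab | hab
    · rw [uIcc_of_le hab] at hx; exact le_trans ha hx.1
    · rw [uIcc_of_ge hab] at hx; exact le_trans hb hx.1
  have hIcont : ContinuousOn I (Ici 0) := by
    have := cont_primitive (fun T hT => hIint 0 T le_rfl hT.le)
    exact this.congr (fun w _ => hI w)
  have hI0 : I 0 = 0 := by rw [hI]; simp
  have hIadd : ∀ a b : ℝ, 0 ≤ a → a ≤ b → I b = I a + ∫ u in a..b, Real.exp (m u) := by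
    intro a b ha hab
    rw [hI, hI]
    rw [← intervalIntegral.integral_add_adjacent_intervals (hIint 0 a le_rfl ha)
      (hIint a b ha (le_trans ha hab))]
  have hImono : ∀ a b : ℝ, 0 ≤ a → a ≤ b → I a ≤ I b := by
    intro a b ha hab
    rw [hIadd a b ha hab]
    have : 0 ≤ ∫ u in a..b, Real.exp (m u) := by
      rw [intervalIntegral.integral_of_le hab]
      exact setIntegral_nonneg measurableSet_Ioc (fun v _ => (Real.exp_pos _).le)
    linarith
  have hInn : ∀ w : ℝ, 0 ≤ w → 0 ≤ I w := by
    intro w hw; have := hImono 0 w le_rfl hw; rw [hI0] at this; exact this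
  have hIneg : ∀ w : ℝ, w ≤ 0 → I w ≤ 0 := by
    intro w hw
    by_cases hInt : IntervalIntegrable (fun u => Real.exp (m u)) volume 0 w
    · rw [hI, intervalIntegral.integral_symm w 0]
      have : 0 ≤ ∫ u in w..0, Real.exp (m u) := by
        rw [intervalIntegral.integral_of_le hw]
        exact setIntegral_nonneg measurableSet_Ioc (fun v _ => (Real.exp_pos _).le)
      linarith
    · rw [hI, intervalIntegral.integral_undef hInt]
  have hIinv_pos : ∀ z : ℝ, 0 < z → 0 < Iinv z := by
    intro z hz
    by_contra hcon
    push_neg at hcon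
    have := hIneg _ hcon
    rw [hIinv_right z hz.le] at this
    linarith
  have hIderiv : ∀ u : ℝ, 0 < u → HasDerivAt I (Real.exp (m u)) u := by
    intro u hu
    have hprim : HasDerivAt (fun w => ∫ t in (0:ℝ)..w, Real.exp (m t))
        (Real.exp (m u)) u := by
      apply intervalIntegral.integral_hasDerivAt_right (hIint 0 u le_rfl hu.le)
      · exact ((hmexp_cont.mono (fun x (hx : x ∈ Ioi (0:ℝ)) => mem_Ici.2 hx.le)).stronglyMeasurableAtFilter
          isOpen_Ioi u hu)
      · exact (hmexp_cont.continuousAt (Ici_mem_nhds hu))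
    exact hprim.congr_of_eventuallyEq (Filter.Eventually.of_forall (fun w => hI w))
  -- compact set bound and z₀
  obtain ⟨Kc, hKcomp, hKsub, hKb⟩ := hybound
  obtain ⟨k₂, hk₂⟩ := hKcomp.bddAbove
  set K : ℝ := max k₂ 1 + 1 with hKdef
  have hKpos : 0 < K := by
    have : (1:ℝ) ≤ max k₂ 1 := le_max_right _ _
    simp only [hKdef]; linarith
  have hKgt : ∀ x ∈ Kc, x < K := by
    intro x hx
    have h1 : x ≤ k₂ := hk₂ hx
    have h2 : k₂ ≤ max k₂ 1 := le_max_left _ _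
    simp only [hKdef]; linarith
  set z₀ : ℝ := max (Iinv K) ϑ + 1 with hz₀def
  have hz₀ϑ : ϑ < z₀ := by
    have : ϑ ≤ max (Iinv K) ϑ := le_max_right _ _
    simp only [hz₀def]; linarith
  have hz₀pos : 0 < z₀ := lt_trans hϑpos hz₀ϑ
  have hz₀one : 1 < z₀ := by
    have h1 : 0 < Iinv K := hIinv_pos K hKpos
    have : Iinv K ≤ max (Iinv K) ϑ := le_max_left _ _
    simp only [hz₀def]; linarith
  have hIz₀K : K ≤ I z₀ := by
    have h1 : 0 < Iinv K := hIinv_pos K hKpos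
    have h2 : Iinv K ≤ z₀ := by
      have : Iinv K ≤ max (Iinv K) ϑ := le_max_left _ _
      simp only [hz₀def]; linarith
    calc K = I (Iinv K) := (hIinv_right K hKpos.le).symm
    _ ≤ I z₀ := hImono _ _ h1.le h2
  have hIz₀pos : 0 < I z₀ := lt_of_lt_of_le hKpos hIz₀K
  -- substitution and growth of A ∘ I
  have hAgrow : ∀ z : ℝ, z₀ ≤ z →
      A (I z) ≤ A (I z₀) + p * (Real.log z - Real.log z₀) := by
    intro z hz
    have hzpos : 0 < z := lt_of_lt_of_le hz₀pos hz
    have huIcc : uIcc z₀ z = Icc z₀ z := uIcc_of_le hz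
    have hIz : I z₀ ≤ I z := hImono z₀ z hz₀pos.le hz
    have hIpos : ∀ x ∈ Icc z₀ z, 0 < I x := by
      intro x hx
      have : K ≤ I x := le_trans hIz₀K (hImono z₀ x hz₀pos.le hx.1)
      linarith
    have hsubst : ∫ v in (I z₀)..(I z), y v
        = ∫ u in z₀..z, Real.exp (m u) • y (I u) := by
      have hcomp := intervalIntegral.integral_comp_smul_deriv' (a := z₀) (b := z)
        (f := I) (f' := fun u => Real.exp (m u)) (g := y)
        (fun x hx => hIderiv x (by rw [huIcc] at hx; linarith [hx.1]))
        (hmexp_cont.mono (by rw [huIcc]; exact fun x hx => le_trans hz₀pos.le hx.1))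
        (ycont.mono ?_)
      · simp only [Function.comp] at hcomp
        exact hcomp.symm
      · rintro w ⟨x, hx, rfl⟩
        rw [huIcc] at hx
        exact hIpos x hx
    rw [hAadd (I z₀) (I z) (hInn z₀ hz₀pos.le) hIz, hsubst]
    have hptwise : ∀ u ∈ Icc z₀ z, Real.exp (m u) • y (I u) ≤ p * u⁻¹ := by
      intro u hu
      have hu0 : 0 < u := lt_of_lt_of_le hz₀pos hu.1
      have hIu : 0 < I u := hIpos u hu
      have hIuK : K ≤ I u := le_trans hIz₀K (hImono z₀ u hz₀pos.le hu.1)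
      have hnot : I u ∉ Kc := fun hmem => absurd (hKgt _ hmem) (by linarith)
      have hyb := hKb (I u) ⟨mem_Ioi.2 hIu, hnot⟩
      have hreq : r (I u) = Real.exp (-(m u)) / Real.sqrt (ω u) := by
        rw [hr, hIinv_left u hu0.le]
      rw [hreq] at hyb
      have hexp : (0:ℝ) < Real.exp (m u) := Real.exp_pos _
      have hωune : Real.sqrt (ω u) ≠ 0 := ne_of_gt (Real.sqrt_pos.2 (hωpos u hu0))
      calc Real.exp (m u) • y (I u) = Real.exp (m u) * y (I u) := smul_eq_mul _ _
      _ ≤ Real.exp (m u) * (Real.sqrt lam * (Real.exp (-(m u)) / Real.sqrt (ω u))) :=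
          mul_le_mul_of_nonneg_left hyb hexp.le
      _ = Real.sqrt lam / Real.sqrt (ω u) := by
          rw [Real.exp_neg]
          field_simp
      _ ≤ p / u := hkey u hu0
      _ = p * u⁻¹ := div_eq_mul_inv _ _
    have hint1 : IntervalIntegrable (fun u => Real.exp (m u) • y (I u)) volume z₀ z := by
      apply ContinuousOn.intervalIntegrable
      rw [huIcc]
      apply ContinuousOn.smul (f := fun u => Real.exp (m u)) (g := fun u => y (I u))
      · exact hmexp_cont.mono (fun x hx => le_trans hz₀pos.le hx.1)
      · apply ycont.comp (hIcont.mono (fun x hx => le_trans hz₀pos.le hx.1))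
        exact fun x hx => mem_Ioi.2 (hIpos x hx)
    have hint2 : IntervalIntegrable (fun u => p * u⁻¹) volume z₀ z := by
      apply ContinuousOn.intervalIntegrable
      rw [huIcc]
      apply continuousOn_const.mul
      apply ContinuousOn.inv₀ continuousOn_id
      intro x hx
      have : 0 < x := lt_of_lt_of_le hz₀pos hx.1
      exact ne_of_gt this
    have hmono' := intervalIntegral.integral_mono_on hz hint1 hint2 hptwise
    have heval : ∫ u in z₀..z, p * u⁻¹ = p * (Real.log z - Real.log z₀) := by
      rw [intervalIntegral.integral_const_mul, integral_inv_of_pos hz₀pos hzpos,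
        Real.log_div (ne_of_gt hzpos) (ne_of_gt hz₀pos)]
    rw [heval] at hmono'
    linarith
  -- Φ in terms of A and J
  have hΦ' : ∀ z, Φ z = (Real.exp (-(m z)) / ω z) * Real.exp (-(A (I z))) *
      (∫ u in (0:ℝ)..z, Real.exp (m u + 2 * A (I u))) := fun z => hΦ z
  set J : ℝ → ℝ := fun z => ∫ u in (0:ℝ)..z, Real.exp (m u + 2 * A (I u)) with hJdef
  have gcont : ContinuousOn (fun u => Real.exp (m u + 2 * A (I u))) (Ici 0) := by
    apply Real.continuous_exp.comp_continuousOn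
    apply hmc.add
    apply continuousOn_const.mul
    exact hAcont.comp hIcont (fun t ht => hInn t ht)
  have hJint : ∀ T : ℝ, 0 < T →
      IntervalIntegrable (fun u => Real.exp (m u + 2 * A (I u))) volume 0 T := by
    intro T hT
    apply ContinuousOn.intervalIntegrable
    apply gcont.mono
    rw [uIcc_of_le hT.le]
    exact fun x hx => hx.1
  have hJcont : ContinuousOn J (Ici 0) := cont_primitive hJint
  have hJnn : ∀ z : ℝ, 0 ≤ z → 0 ≤ J z := by
    intro z hz
    rw [hJdef]
    simp only
    rw [intervalIntegral.integral_of_le hz]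
    exact setIntegral_nonneg measurableSet_Ioc (fun v _ => (Real.exp_pos _).le)
  have hJbound : ∀ z : ℝ, 0 ≤ z → J z ≤ Real.exp (2 * A (I z)) * I z := by
    intro z hz
    have hptw : ∀ u ∈ Icc (0:ℝ) z, Real.exp (m u + 2 * A (I u)) ≤
        Real.exp (m u) * Real.exp (2 * A (I z)) := by
      intro u hu
      rw [← Real.exp_add]
      apply Real.exp_le_exp.2
      have h1 : I u ≤ I z := hImono u z hu.1 hu.2
      have h2 : A (I u) ≤ A (I z) := hAmono _ _ (hInn u hu.1) h1
      linarith
    rcases eq_or_lt_of_le hz with hz0 | hz0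
    · rw [hJdef]; simp only [← hz0]
      rw [intervalIntegral.integral_same]
      rw [← hz0] at *
      rw [hI0]
      simp
    · have hint2 : IntervalIntegrable
          (fun u => Real.exp (m u) * Real.exp (2 * A (I z))) volume 0 z :=
        (hIint 0 z le_rfl hz).mul_const _
      have := intervalIntegral.integral_mono_on hz (hJint z hz0) hint2 hptw
      rw [intervalIntegral.integral_mul_const, ← hI z] at this
      rw [hJdef]
      simp only
      linarith [this]
  have Φnn : ∀ z : ℝ, 0 < z → 0 ≤ Φ z := by
    intro z hz
    rw [hΦ' z]
    apply mul_nonneg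
    · exact mul_nonneg (div_nonneg (Real.exp_pos _).le (hωpos z hz).le) (Real.exp_pos _).le
    · exact hJnn z hz.le
  have Φcont : ContinuousOn Φ (Ioi 0) := by
    have hsub : (Ioi (0:ℝ)) ⊆ Ici 0 := fun x hx => mem_Ici.2 (le_of_lt hx)
    have h1 : ContinuousOn (fun z => (Real.exp (-(m z)) / ω z) *
        Real.exp (-(A (I z))) * J z) (Ioi 0) := by
      apply ContinuousOn.mul
      · apply ContinuousOn.mul
        · apply ContinuousOn.div
          · exact (Real.continuous_exp.comp_continuousOn (hmc.mono hsub).neg)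
          · exact hωcont.continuousOn
          · exact fun z hz => ne_of_gt (hωpos z hz)
        · apply Real.continuous_exp.comp_continuousOn
          apply ContinuousOn.neg
          exact ((hAcont.comp hIcont (fun t ht => hInn t ht)).mono hsub)
      · exact hJcont.mono hsub
    exact h1.congr (fun z _ => hΦ' z)
  -- growth bound for exp(-(m z)) * I z
  set D : ℝ := Real.exp (-(m z₀)) * I z₀ with hDdef
  have hDnn : 0 ≤ D := mul_nonneg (Real.exp_pos _).le (hInn z₀ hz₀pos.le)
  have hIub : ∀ z : ℝ, z₀ ≤ z → Real.exp (-(m z)) * I z ≤ D + z := by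
    intro z hz
    have h1 : I z ≤ I z₀ + (z - z₀) * Real.exp (m z) := by
      have hptw : ∀ u ∈ Icc z₀ z, Real.exp (m u) ≤ Real.exp (m z) :=
        fun u hu => Real.exp_le_exp.2 (hmono u z (le_trans hz₀ϑ.le hu.1) hu.2)
      have hint2 : IntervalIntegrable (fun _ : ℝ => Real.exp (m z)) volume z₀ z :=
        intervalIntegrable_const
      have := intervalIntegral.integral_mono_on hz
        (hIint z₀ z hz₀pos.le (le_trans hz₀pos.le hz)) hint2 hptw
      rw [intervalIntegral.integral_const, smul_eq_mul] at this
      rw [hIadd z₀ z hz₀pos.le hz]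
      linarith
    have h2 : Real.exp (-(m z)) ≤ Real.exp (-(m z₀)) :=
      Real.exp_le_exp.2 (neg_le_neg (hmono z₀ z hz₀ϑ.le hz))
    calc Real.exp (-(m z)) * I z
        ≤ Real.exp (-(m z)) * (I z₀ + (z - z₀) * Real.exp (m z)) :=
          mul_le_mul_of_nonneg_left h1 (Real.exp_pos _).le
    _ = Real.exp (-(m z)) * I z₀ + (z - z₀) * (Real.exp (-(m z)) * Real.exp (m z)) := by
          ring
    _ = Real.exp (-(m z)) * I z₀ + (z - z₀) := by
          rw [← Real.exp_add]; simp
    _ ≤ D + z := by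
          have h3 : Real.exp (-(m z)) * I z₀ ≤ D := by
            rw [hDdef]
            exact mul_le_mul_of_nonneg_right h2 (hInn z₀ hz₀pos.le)
          linarith
  -- polynomial bound for Φ at infinity
  set nn : ℕ := ⌈p⌉₊ with hnn
  set E : ℝ := Real.exp (A (I z₀) - p * Real.log z₀) with hEdef
  have hEpos : 0 < E := Real.exp_pos _
  set z₁ : ℝ := max z₀ D + 1 with hz₁def
  have hz₀z₁ : z₀ ≤ z₁ := by
    have : z₀ ≤ max z₀ D := le_max_left _ _
    simp only [hz₁def]; linarith
  have hz₁one : 1 < z₁ := lt_of_lt_of_le hz₀one hz₀z₁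
  have hz₁pos : 0 < z₁ := lt_trans one_pos hz₁one
  set C₅ : ℝ := 4 * E / σ ^ 2 with hC₅def
  have hC₅pos : 0 < C₅ := by
    apply div_pos (by linarith) (by positivity)
  have hbig : ∀ z : ℝ, z₁ ≤ z → Φ z ≤ C₅ * z ^ nn := by
    intro z hz
    have hzz₀ : z₀ ≤ z := le_trans hz₀z₁ hz
    have hz1 : 1 ≤ z := le_trans hz₁one.le hz
    have hzpos : 0 < z := lt_of_lt_of_le one_pos hz1
    have hDz : D ≤ z := by
      have : D ≤ max z₀ D := le_max_right _ _
      simp only [hz₁def] at hz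
      linarith
    have hAe : Real.exp (A (I z)) ≤ E * z ^ nn := by
      have h1 := hAgrow z hzz₀
      have hlogz : 0 ≤ Real.log z := Real.log_nonneg hz1
      have h2 : p * Real.log z ≤ (nn:ℝ) * Real.log z :=
        mul_le_mul_of_nonneg_right (Nat.le_ceil p) hlogz
      calc Real.exp (A (I z))
          ≤ Real.exp ((A (I z₀) - p * Real.log z₀) + p * Real.log z) :=
            Real.exp_le_exp.2 (by linarith)
      _ = E * Real.exp (p * Real.log z) := by rw [Real.exp_add]
      _ ≤ E * Real.exp ((nn:ℝ) * Real.log z) :=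
            mul_le_mul_of_nonneg_left (Real.exp_le_exp.2 h2) hEpos.le
      _ = E * z ^ nn := by
            rw [← Real.exp_log hzpos, ← Real.exp_nat_mul]
            rw [Real.exp_log hzpos]
    have hmain : Φ z ≤ Real.exp (A (I z)) * (Real.exp (-(m z)) * I z) / ω z := by
      rw [hΦ' z]
      have hJb := hJbound z (by linarith : (0:ℝ) ≤ z)
      have hfac : 0 ≤ (Real.exp (-(m z)) / ω z) * Real.exp (-(A (I z))) :=
        mul_nonneg (div_nonneg (Real.exp_pos _).le (hωpos z hzpos).le) (Real.exp_pos _).le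
      have h1 : (Real.exp (-(m z)) / ω z) * Real.exp (-(A (I z))) *
          (∫ u in (0:ℝ)..z, Real.exp (m u + 2 * A (I u)))
          ≤ (Real.exp (-(m z)) / ω z) * Real.exp (-(A (I z))) *
          (Real.exp (2 * A (I z)) * I z) := mul_le_mul_of_nonneg_left hJb hfac
      refine h1.trans (le_of_eq ?_)
      have hexpc : Real.exp (-(A (I z))) * Real.exp (2 * A (I z))
          = Real.exp (A (I z)) := by
        rw [← Real.exp_add]; congr 1; ring
      calc (Real.exp (-(m z)) / ω z) * Real.exp (-(A (I z))) *
          (Real.exp (2 * A (I z)) * I z)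
          = (Real.exp (-(m z)) * (Real.exp (-(A (I z))) * Real.exp (2 * A (I z)))
            * I z) / ω z := by ring
      _ = Real.exp (A (I z)) * (Real.exp (-(m z)) * I z) / ω z := by
            rw [hexpc]; ring
    have hden := hωlb z hzpos
    have hdenpos : 0 < σ ^ 2 * z ^ 2 / 2 := by positivity
    have hnum : Real.exp (A (I z)) * (Real.exp (-(m z)) * I z) ≤ (E * z ^ nn) * (2 * z) := by
      apply mul_le_mul hAe ((hIub z hzz₀).trans (by linarith)) ?_ ?_
      · exact mul_nonneg (Real.exp_pos _).le (hInn z (by linarith))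
      · positivity
    calc Φ z ≤ Real.exp (A (I z)) * (Real.exp (-(m z)) * I z) / ω z := hmain
    _ ≤ ((E * z ^ nn) * (2 * z)) / (σ ^ 2 * z ^ 2 / 2) := by
          apply div_le_div₀ (by positivity) hnum hdenpos hden
    _ = C₅ * z ^ nn / z := by
          rw [hC₅def]
          field_simp
          ring
    _ ≤ C₅ * z ^ nn := div_le_self (by positivity) hz1
  -- bound for Φ near zero
  obtain ⟨Mg, hMg⟩ := (isCompact_Icc (a := (0:ℝ)) (b := z₁)).exists_bound_of_continuousOn
    (gcont.mono (fun x hx => hx.1))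
  obtain ⟨Me, hMe⟩ := (isCompact_Icc (a := (0:ℝ)) (b := z₁)).exists_bound_of_continuousOn
    ((Real.continuous_exp.comp_continuousOn hmc.neg).mono (fun x (hx : x ∈ Icc (0:ℝ) z₁) => hx.1))
  have hMgnn : 0 ≤ Mg := le_trans (norm_nonneg _) (hMg 0 ⟨le_rfl, hz₁pos.le⟩)
  have hMenn : 0 ≤ Me := le_trans (norm_nonneg _) (hMe 0 ⟨le_rfl, hz₁pos.le⟩)
  have hsmall : ∀ z ∈ Ioc (0:ℝ) z₁, Φ z ≤ Me * Mg / c := by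
    intro z hz
    obtain ⟨hz0, hzz₁⟩ := hz
    have e1 : Real.exp (-(m z)) / ω z ≤ Me / (c * z) := by
      apply div_le_div₀ hMenn ?_ (mul_pos hc hz0) (hωlb' z hz0)
      have := hMe z ⟨hz0.le, hzz₁⟩
      rw [Real.norm_eq_abs] at this
      exact le_trans (le_abs_self _) this
    have e2 : Real.exp (-(A (I z))) ≤ 1 :=
      Real.exp_le_one_iff.2 (neg_nonpos.2 (hAnn _ (hInn z hz0.le)))
    have e3 : J z ≤ z * Mg := by
      have hptw : ∀ u ∈ Icc (0:ℝ) z, Real.exp (m u + 2 * A (I u)) ≤ Mg := by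
        intro u hu
        have := hMg u ⟨hu.1, le_trans hu.2 hzz₁⟩
        rw [Real.norm_eq_abs] at this
        exact le_trans (le_abs_self _) this
      have := intervalIntegral.integral_mono_on hz0.le (hJint z hz0)
        intervalIntegrable_const hptw
      rw [intervalIntegral.integral_const, smul_eq_mul] at this
      rw [hJdef]; simp only
      calc (∫ u in (0:ℝ)..z, Real.exp (m u + 2 * A (I u))) ≤ (z - 0) * Mg := this
      _ = z * Mg := by ring
    have hfacnn : 0 ≤ Me / (c * z) := div_nonneg hMenn (mul_pos hc hz0).le
    calc Φ z = (Real.exp (-(m z)) / ω z) * Real.exp (-(A (I z))) * J z := hΦ' z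
    _ ≤ (Me / (c * z)) * 1 * (z * Mg) := by
        apply mul_le_mul ?_ e3 (hJnn z hz0.le) ?_
        · apply mul_le_mul e1 e2 (Real.exp_pos _).le hfacnn
        · rw [mul_one]; exact hfacnn
    _ = Me * Mg / c := by
        field_simp
  set M : ℝ := Me * Mg / c with hMdef
  have hMnn : 0 ≤ M := by positivity
  -- main integrability claim
  have hintall : ∀ x : ℝ, 0 < x → ∀ q : ℕ,
      IntegrableOn (fun z => z ^ q * (Real.exp (-(x * z)) * Φ z)) (Ioi 0) volume := by
    intro x hx q
    have hcontf : ContinuousOn (fun z => z ^ q * (Real.exp (-(x * z)) * Φ z)) (Ioi 0) := by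
      apply ContinuousOn.mul (continuousOn_pow q)
      apply ContinuousOn.mul ?_ Φcont
      exact (Real.continuous_exp.comp (continuous_const.mul continuous_id).neg).continuousOn
    have hfnn : ∀ z : ℝ, 0 < z → 0 ≤ z ^ q * (Real.exp (-(x * z)) * Φ z) := by
      intro z hz
      exact mul_nonneg (pow_nonneg hz.le q)
        (mul_nonneg (Real.exp_pos _).le (Φnn z hz))
    rw [← Ioc_union_Ioi_eq_Ioi hz₁pos.le]
    apply IntegrableOn.union
    · apply Integrable.mono' (g := fun _ => z₁ ^ q * M)
      · exact integrableOn_const measure_Ioc_lt_top.ne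
      · exact (hcontf.mono Ioc_subset_Ioi_self).aestronglyMeasurable measurableSet_Ioc
      · filter_upwards [ae_restrict_mem measurableSet_Ioc] with z hz
        rw [Real.norm_eq_abs, abs_of_nonneg (hfnn z hz.1)]
        have h1 : z ^ q ≤ z₁ ^ q := pow_le_pow_left₀ hz.1.le hz.2 q
        have h2 : Real.exp (-(x * z)) ≤ 1 :=
          Real.exp_le_one_iff.2 (by nlinarith [hz.1, hx])
        have h3 : Φ z ≤ M := hsmall z hz
        have h4 : Real.exp (-(x * z)) * Φ z ≤ 1 * M :=
          mul_le_mul h2 h3 (Φnn z hz.1) one_pos.le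
        rw [one_mul] at h4
        exact mul_le_mul h1 h4 (mul_nonneg (Real.exp_pos _).le (Φnn z hz.1))
          (pow_nonneg hz₁pos.le q)
    · set N : ℕ := q + nn with hN
      set KK : ℝ := C₅ * ((N.factorial : ℝ) * (2 / x) ^ N) with hKK
      have hexpbd : ∀ z : ℝ, 0 ≤ z → z ^ N * Real.exp (-(x * z)) ≤
          (N.factorial : ℝ) * (2 / x) ^ N * Real.exp (-(x / 2) * z) := by
        intro z hz
        have hxz : 0 ≤ x / 2 * z := by positivity
        have h0 : (x / 2 * z) ^ N / (N.factorial : ℝ) ≤ Real.exp (x / 2 * z) :=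
          Real.pow_div_factorial_le_exp _ hxz N
        have hfacpos : (0:ℝ) < (N.factorial : ℝ) := by
          exact_mod_cast N.factorial_pos
        have h1 : (x / 2 * z) ^ N ≤ (N.factorial : ℝ) * Real.exp (x / 2 * z) := by
          rw [div_le_iff₀ hfacpos] at h0
          linarith
        have h2 : z ^ N = (2 / x) ^ N * (x / 2 * z) ^ N := by
          rw [← mul_pow]
          congr 1
          field_simp
        calc z ^ N * Real.exp (-(x * z))
            = (2 / x) ^ N * (x / 2 * z) ^ N * Real.exp (-(x * z)) := by rw [← h2]
        _ ≤ (2 / x) ^ N * ((N.factorial : ℝ) * Real.exp (x / 2 * z)) *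
              Real.exp (-(x * z)) := by
            apply mul_le_mul_of_nonneg_right
              (mul_le_mul_of_nonneg_left h1 (by positivity)) (Real.exp_pos _).le
        _ = (N.factorial : ℝ) * (2 / x) ^ N *
              (Real.exp (x / 2 * z) * Real.exp (-(x * z))) := by ring
        _ = (N.factorial : ℝ) * (2 / x) ^ N * Real.exp (-(x / 2) * z) := by
            rw [← Real.exp_add]
            congr 1
            congr 1
            ring
      apply Integrable.mono' (g := fun z => KK * Real.exp (-(x / 2) * z))
      · exact (exp_neg_integrableOn_Ioi z₁ (half_pos hx)).const_mul KK
      · exact (hcontf.mono (Ioi_subset_Ioi hz₁pos.le)).aestronglyMeasurable measurableSet_Ioi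
      · filter_upwards [ae_restrict_mem measurableSet_Ioi] with z hz
        have hzz₁ : z₁ ≤ z := le_of_lt hz
        have hzpos : 0 < z := lt_trans hz₁pos hz
        rw [Real.norm_eq_abs, abs_of_nonneg (hfnn z hzpos)]
        calc z ^ q * (Real.exp (-(x * z)) * Φ z)
            ≤ z ^ q * (Real.exp (-(x * z)) * (C₅ * z ^ nn)) := by
              apply mul_le_mul_of_nonneg_left ?_ (pow_nonneg hzpos.le q)
              exact mul_le_mul_of_nonneg_left (hbig z hzz₁) (Real.exp_pos _).le
        _ = C₅ * (z ^ N * Real.exp (-(x * z))) := by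
              rw [hN, pow_add]; ring
        _ ≤ C₅ * ((N.factorial : ℝ) * (2 / x) ^ N * Real.exp (-(x / 2) * z)) :=
              mul_le_mul_of_nonneg_left (hexpbd z hzpos.le) hC₅pos.le
        _ = KK * Real.exp (-(x / 2) * z) := by rw [hKK]; ring
  -- measurability helper
  have hcontf : ∀ (x : ℝ) (q : ℕ),
      ContinuousOn (fun z => z ^ q * (Real.exp (-(x * z)) * Φ z)) (Ioi 0) := by
    intro x q
    apply ContinuousOn.mul (continuousOn_pow q)
    apply ContinuousOn.mul ?_ Φcont
    exact (Real.continuous_exp.comp (continuous_const.mul continuous_id).neg).continuousOn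
  have hmeasf : ∀ (x : ℝ) (q : ℕ), AEStronglyMeasurable
      (fun z => z ^ q * (Real.exp (-(x * z)) * Φ z)) (volume.restrict (Ioi 0)) :=
    fun x q => (hcontf x q).aestronglyMeasurable measurableSet_Ioi
  -- the family of integrals and derivatives
  set F : ℕ → ℝ → ℝ :=
    fun k x => ∫ z in Ioi (0:ℝ), z ^ k * (Real.exp (-(x * z)) * Φ z) with hFdef
  have hFderiv : ∀ (k : ℕ) (x : ℝ), 0 < x → HasDerivAt (F k) (-(F (k+1) x)) x := by
    intro k x hx
    have main := hasDerivAt_integral_of_dominated_loc_of_deriv_le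
      (μ := volume.restrict (Ioi 0)) (x₀ := x)
      (F := fun x' z => z ^ k * (Real.exp (-(x' * z)) * Φ z))
      (F' := fun x' z => -(z ^ (k+1) * (Real.exp (-(x' * z)) * Φ z)))
      (bound := fun z => z ^ (k+1) * (Real.exp (-(x/2 * z)) * Φ z))
      (Metric.ball_mem_nhds x (half_pos hx)) (Filter.Eventually.of_forall (fun x' => hmeasf x' k))
      (hintall x hx k) ((hmeasf x (k+1)).neg) ?_ (hintall (x/2) (half_pos hx) (k+1)) ?_
    · have := main.2
      rwa [integral_neg] at this
    · filter_upwards [ae_restrict_mem measurableSet_Ioi] with z hz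
      intro x' hx'
      rw [Metric.mem_ball, Real.dist_eq, abs_lt] at hx'
      have hx2 : x/2 < x' := by linarith [hx'.1]
      have hzpos : (0:ℝ) < z := hz
      rw [norm_neg, Real.norm_eq_abs, abs_of_nonneg (mul_nonneg (pow_nonneg hzpos.le _)
        (mul_nonneg (Real.exp_pos _).le (Φnn z hzpos)))]
      apply mul_le_mul_of_nonneg_left ?_ (pow_nonneg hzpos.le _)
      apply mul_le_mul_of_nonneg_right ?_ (Φnn z hzpos)
      apply Real.exp_le_exp.2
      nlinarith
    · filter_upwards [ae_restrict_mem measurableSet_Ioi] with z hz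
      intro x' _
      have hzpos : (0:ℝ) < z := hz
      have h1 : HasDerivAt (fun w : ℝ => -(w * z)) (-z) x' := by
        exact ((hasDerivAt_id x').mul_const z).neg.congr_deriv (by ring)
      have hexp : HasDerivAt (fun w : ℝ => Real.exp (-(w * z)))
          (Real.exp (-(x' * z)) * -z) x' := h1.exp
      have h2 := hexp.const_mul (z ^ k * Φ z)
      have heq : (fun w => z ^ k * (Real.exp (-(w * z)) * Φ z))
          = fun w => (z ^ k * Φ z) * Real.exp (-(w * z)) := by
        funext w; ring
      rw [heq]
      exact h2.congr_deriv (by ring)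
  refine ⟨?_, ?_, ?_, ?_⟩
  · intro x hx
    refine ⟨?_, ?_, hintall x hx 2⟩
    · have := hintall x hx 0
      simpa using this
    · have := hintall x hx 1
      simpa using this
  · intro x hx
    rw [hh]
    have h1 : 0 ≤ ∫ z in Ioi (0:ℝ), Real.exp (-(x * z)) * Φ z :=
      setIntegral_nonneg measurableSet_Ioi
        (fun z hz => mul_nonneg (Real.exp_pos _).le (Φnn z hz))
    nlinarith
  · intro x₁ hx₁ x₂ hx₂ hle
    rw [hh, hh]
    have hint1 : IntegrableOn (fun z => Real.exp (-(x₁ * z)) * Φ z) (Ioi 0) volume := by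
      have := hintall x₁ hx₁ 0; simpa using this
    have hint2 : IntegrableOn (fun z => Real.exp (-(x₂ * z)) * Φ z) (Ioi 0) volume := by
      have := hintall x₂ hx₂ 0; simpa using this
    have hmono2 : (∫ z in Ioi (0:ℝ), Real.exp (-(x₂ * z)) * Φ z)
        ≤ ∫ z in Ioi (0:ℝ), Real.exp (-(x₁ * z)) * Φ z := by
      apply setIntegral_mono_on hint2 hint1 measurableSet_Ioi
      intro z hz
      apply mul_le_mul_of_nonneg_right ?_ (Φnn z hz)
      apply Real.exp_le_exp.2
      have : (0:ℝ) < z := hz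
      nlinarith
    nlinarith
  · have hhF : h = fun x => 1 + lam * F 0 x := by
      funext x
      rw [hh]
      have : F 0 x = ∫ z in Ioi (0:ℝ), Real.exp (-(x * z)) * Φ z := by
        rw [hFdef]
        simp only [pow_zero, one_mul]
      rw [this]
    have hder_h : ∀ x ∈ Ioi (0:ℝ), HasDerivAt h (-(lam * F 1 x)) x := by
      intro x hx
      rw [hhF]
      have := ((hFderiv 0 x hx).const_mul lam).const_add 1
      exact this.congr_deriv (by ring)
    have hdiff : DifferentiableOn ℝ h (Ioi 0) :=
      fun x hx => ((hder_h x hx).differentiableAt).differentiableWithinAt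
    have hder_g : ∀ x ∈ Ioi (0:ℝ),
        HasDerivAt (fun x => -(lam * F 1 x)) (lam * F 2 x) x := by
      intro x hx
      have := ((hFderiv 1 x hx).const_mul lam).neg
      exact this.congr_deriv (by ring)
    have hcont2 : ContinuousOn (fun x => lam * F 2 x) (Ioi 0) :=
      fun x hx => (continuousAt_const.mul (hFderiv 2 x hx).continuousAt).continuousWithinAt
    have h1 : ContDiffOn ℝ 1 (fun x => -(lam * F 1 x)) (Ioi 0) := by
      have hiff := contDiffOn_succ_iff_deriv_of_isOpen (𝕜 := ℝ) (n := 0)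
        (f := fun x => -(lam * F 1 x)) (s := Ioi (0:ℝ)) isOpen_Ioi
      rw [zero_add] at hiff
      apply hiff.2
      refine ⟨fun x hx => ((hder_g x hx).differentiableAt).differentiableWithinAt,
        by simp, ?_⟩
      rw [contDiffOn_zero]
      apply ContinuousOn.congr hcont2
      intro x hx
      exact (hder_g x hx).deriv
    have hiff2 := contDiffOn_succ_iff_deriv_of_isOpen (𝕜 := ℝ) (n := 1)
      (f := h) (s := Ioi (0:ℝ)) isOpen_Ioi
    rw [(by norm_num : (1 : WithTop ℕ∞) + 1 = 2)] at hiff2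
    apply hiff2.2
    refine ⟨hdiff, by simp, ?_⟩
    apply ContDiffOn.congr h1
    intro x hx
    exact (hder_h x hx).deriv


/-- With y a non-negative C¹ solution of y′ = y² − λr² vanishing at ∞, integrable at 0 and
dominated by √λ·r outside a compact set, and Φ, h as in the paper, the functions
z ↦ e^{−xz}Φ(z), z ↦ z e^{−xz}Φ(z), z ↦ z² e^{−xz}Φ(z) are integrable on (0,∞) for every
x > 0, and h(x) = 1 + λ∫_0^∞ e^{−xz}Φ(z) dz is well defined, positive, non-increasing and
C² on (0,∞). -/
theorem stmt_17
    (b γ c σ : ℝ) (μ : Measure ℝ)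
    (hγ : 0 ≤ γ) (hc : 0 < c) (hσ : 0 < σ)
    (hμ0 : μ (Iic 0) = 0)
    (hμ2 : ∫⁻ x in Ioi (0:ℝ), ENNReal.ofReal (min 1 (x ^ 2)) ∂μ < ⊤)
    (hμlog : ∫⁻ x in Ioi (1:ℝ), ENNReal.ofReal (Real.log x) ∂μ < ⊤)
    (ψ ω m I Iinv r : ℝ → ℝ)
    (hψ : ∀ u, ψ u = -(b * u) + γ ^ 2 * u ^ 2 +
      ∫ x in Ioi (0:ℝ), (Real.exp (-(u * x)) - 1 + (if x < 1 then u * x else 0)) ∂μ)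
    (hgen : ∃ ϑ : ℝ, 0 ≤ ϑ ∧ ∀ z, ϑ ≤ z → 0 < ψ z)
    (hω : ∀ z, ω z = c * z + σ ^ 2 * z ^ 2 / 2)
    (hm : ∀ lam, m lam = ∫ u in (0:ℝ)..lam, ψ u / ω u)
    (hI : ∀ lam, I lam = ∫ u in (0:ℝ)..lam, Real.exp (m u))
    (hIinv_left : ∀ x, 0 ≤ x → Iinv (I x) = x)
    (hIinv_right : ∀ z, 0 ≤ z → I (Iinv z) = z)
    (hr : ∀ z, r z = Real.exp (-(m (Iinv z))) / Real.sqrt (ω (Iinv z)))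
    (lam : ℝ) (hlam : 0 < lam)
    (y : ℝ → ℝ)
    (hy : ∀ z ∈ Ioi (0:ℝ), 0 ≤ y z ∧ HasDerivAt y ((y z) ^ 2 - lam * (r z) ^ 2) z)
    (hy0 : Filter.Tendsto y Filter.atTop (nhds 0))
    (hyint : IntegrableOn y (Ioo 0 1) volume)
    (hybound : ∃ Kc : Set ℝ, IsCompact Kc ∧ Kc ⊆ Ioi 0 ∧
      ∀ z ∈ Ioi (0:ℝ) \ Kc, y z ≤ Real.sqrt lam * r z)
    (Φ h : ℝ → ℝ)
    (hΦ : ∀ z, Φ z = (Real.exp (-(m z)) / ω z) *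
      Real.exp (-(∫ v in (0:ℝ)..(I z), y v)) *
      (∫ u in (0:ℝ)..z, Real.exp (m u + 2 * ∫ v in (0:ℝ)..(I u), y v)))
    (hh : ∀ x, h x = 1 + lam * ∫ z in Ioi (0:ℝ), Real.exp (-(x * z)) * Φ z) :
    (∀ x : ℝ, 0 < x →
      IntegrableOn (fun z => Real.exp (-(x * z)) * Φ z) (Ioi 0) volume ∧
      IntegrableOn (fun z => z * (Real.exp (-(x * z)) * Φ z)) (Ioi 0) volume ∧
      IntegrableOn (fun z => z ^ 2 * (Real.exp (-(x * z)) * Φ z)) (Ioi 0) volume) ∧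
    (∀ x : ℝ, 0 < x → 0 < h x) ∧
    AntitoneOn h (Ioi 0) ∧
    ContDiffOn ℝ 2 h (Ioi 0) := by
  obtain ⟨ϑ₀, hϑ₀nn, hψpos⟩ := hgen
  have hϑ₁pos : (0:ℝ) < ϑ₀ + 1 := by linarith
  have hωpos : ∀ z : ℝ, 0 < z → 0 < ω z := by
    intro z hz; rw [hω]; nlinarith [sq_nonneg (σ * z)]
  have hωcont : Continuous ω := by
    have : ω = fun z => c * z + σ ^ 2 * z ^ 2 / 2 := funext hω
    rw [this]; fun_prop
  have hψωcont : ContinuousOn (fun u => ψ u / ω u) (Ioi 0) :=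
    (psi_cont b γ μ hμ2 ψ hψ).div hωcont.continuousOn (fun z hz => ne_of_gt (hωpos z hz))
  by_cases hcase : ∀ T : ℝ, 0 < T → IntervalIntegrable (fun u => ψ u / ω u) volume 0 T
  · -- m is a genuine continuous primitive
    have hmc : ContinuousOn m (Ici 0) := (cont_primitive hcase).congr (fun z _ => hm z)
    have hmono : ∀ z₁ z₂, ϑ₀ + 1 ≤ z₁ → z₁ ≤ z₂ → m z₁ ≤ m z₂ := by
      intro z₁ z₂ h1 h2
      have hz₁pos : 0 < z₁ := lt_of_lt_of_le hϑ₁pos h1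
      have hint01 := hcase z₁ hz₁pos
      have hint12 : IntervalIntegrable (fun u => ψ u / ω u) volume z₁ z₂ := by
        apply (hcase z₂ (lt_of_lt_of_le hz₁pos h2)).mono_set
        rw [uIcc_of_le h2, uIcc_of_le (le_of_lt (lt_of_lt_of_le hz₁pos h2))]
        exact Icc_subset_Icc hz₁pos.le le_rfl
      rw [hm, hm, ← intervalIntegral.integral_add_adjacent_intervals hint01 hint12]
      have hnn : 0 ≤ ∫ u in z₁..z₂, ψ u / ω u := by
        rw [intervalIntegral.integral_of_le h2]
        apply setIntegral_nonneg measurableSet_Ioc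
        intro u hu
        have hu1 : ϑ₀ ≤ u := by linarith [hu.1]
        have hu0 : 0 < u := lt_of_lt_of_le hϑ₁pos (by linarith [hu.1])
        exact div_nonneg (hψpos u hu1).le (hωpos u hu0).le
      linarith
    exact master c σ hc hσ ω m I Iinv r (ϑ₀ + 1) hϑ₁pos hω hmc hmono hI
      hIinv_left hIinv_right hr lam hlam y hy hyint hybound Φ h hΦ hh
  · -- m vanishes identically on [0, ∞)
    push_neg at hcase
    obtain ⟨T, hT, hTnot⟩ := hcase
    have hmzero : ∀ z : ℝ, 0 ≤ z → m z = 0 := by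
      intro z hz
      rcases eq_or_lt_of_le hz with hz0 | hz0
      · rw [hm, ← hz0, intervalIntegral.integral_same]
      · have hnot : ¬ IntervalIntegrable (fun u => ψ u / ω u) volume 0 z := by
          intro hcon
          rcases le_total T z with hTz | hTz
          · apply hTnot
            apply hcon.mono_set
            rw [uIcc_of_le hT.le, uIcc_of_le hz0.le]
            exact Icc_subset_Icc le_rfl hTz
          · apply hTnot
            apply hcon.trans
            apply ContinuousOn.intervalIntegrable
            apply hψωcont.mono
            rw [uIcc_of_le hTz]
            exact fun x hx => lt_of_lt_of_le hz0 hx.1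
        rw [hm, intervalIntegral.integral_undef hnot]
    have hmc : ContinuousOn m (Ici 0) :=
      continuousOn_const.congr (fun z hz => hmzero z hz)
    have hmono : ∀ z₁ z₂, ϑ₀ + 1 ≤ z₁ → z₁ ≤ z₂ → m z₁ ≤ m z₂ := by
      intro z₁ z₂ h1 h2
      have hz₁ : (0:ℝ) ≤ z₁ := le_trans hϑ₁pos.le h1
      rw [hmzero z₁ hz₁, hmzero z₂ (le_trans hz₁ h2)]
    exact master c σ hc hσ ω m I Iinv r (ϑ₀ + 1) hϑ₁pos hω hmc hmono hI
      hIinv_left hIinv_right hr lam hlam y hy hyint hybound Φ h hΦ hh
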